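/- Let f : ℝⁿ → ℝⁿ be continuously differentiable with Jacobian Df(x), let λ ≥ 0, ε ≥ 0, and let P be a real symmetric n×n matrix such that Df(x)ᵀP + P·Df(x) ⪯ −2λP − εI for all x ∈ ℝⁿ. Let x, y : [0,∞) → ℝⁿ be differentiable with x′(t) = f(x(t)) and y′(t) = f(y(t)) for all t ≥ 0, and suppose (x(0)−y(0))ᵀP(x(0)−y(0)) ≤ 0. Then (x(t)−y(t))ᵀP(x(t)−y(t)) ≤ 0 for all t ≥ 0; that is, the cone K⁻ = { z : zᵀPz ≤ 0 } is forward invariant for differences of solutions. -/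

import Mathlib

open Matrix

/-- `M ⪯ N` iff `N - M` is positive semidefinite. -/
def matLE {m : Type*} [Fintype m] (M N : Matrix m m ℝ) : Prop := (N - M).PosSemidef

/-- A real symmetric matrix has inertia `p`: exactly `p` negative eigenvalues,
`card m − p` positive eigenvalues, and no zero eigenvalues, counted with multiplicity
(as roots of the characteristic polynomial). -/
def hasInertia {m : Type*} [Fintype m] [DecidableEq m]
    (P : Matrix m m ℝ) (p : ℕ) : Prop :=
  Multiset.countP (fun μ : ℝ => μ < 0) P.charpoly.roots = p ∧
  Multiset.countP (fun μ : ℝ => 0 < μ) P.charpoly.roots = Fintype.card m - p ∧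
  (0 : ℝ) ∉ P.charpoly.roots

/-- Number of complex eigenvalues (with algebraic multiplicity) of a real matrix
with strictly positive real part. -/
noncomputable def posReCount {m : Type*} [Fintype m] [DecidableEq m]
    (A : Matrix m m ℝ) : ℕ :=
  Multiset.countP (fun μ : ℂ => 0 < μ.re) (A.map Complex.ofReal).charpoly.roots

/-- Number of complex eigenvalues (with algebraic multiplicity) of a real matrix
with strictly negative real part. -/
noncomputable def negReCount {m : Type*} [Fintype m] [DecidableEq m]
    (A : Matrix m m ℝ) : ℕ :=
  Multiset.countP (fun μ : ℂ => μ.re < 0) (A.map Complex.ofReal).charpoly.roots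

/-- The quadratic form `xᵀ P x`. -/
def quadForm {m : Type*} [Fintype m] (P : Matrix m m ℝ) (x : m → ℝ) : ℝ :=
  x ⬝ᵥ P.mulVec x

/-- Euclidean norm on `m → ℝ`. -/
noncomputable def enorm {m : Type*} [Fintype m] (x : m → ℝ) : ℝ :=
  Real.sqrt (x ⬝ᵥ x)

/-- `J` is the Jacobian of `f`. -/
def IsJacobianOf {n : ℕ} (J : (Fin n → ℝ) → Matrix (Fin n) (Fin n) ℝ)
    (f : (Fin n → ℝ) → (Fin n → ℝ)) : Prop :=
  ∀ x, HasFDerivAt f (LinearMap.toContinuousLinearMap ((J x).mulVecLin)) x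


theorem aux_hasDerivAt_dot {n : ℕ} {a b : ℝ → Fin n → ℝ} {a' b' : Fin n → ℝ} {t : ℝ}
    (ha : HasDerivAt a a' t) (hb : HasDerivAt b b' t) :
    HasDerivAt (fun s => a s ⬝ᵥ b s) (a' ⬝ᵥ b t + a t ⬝ᵥ b') t := by
  simp only [dotProduct, ← Finset.sum_add_distrib]
  exact HasDerivAt.fun_sum fun i _ => (hasDerivAt_pi.mp ha i).mul (hasDerivAt_pi.mp hb i)

theorem aux_hasDerivAt_mulVec {n : ℕ} (P : Matrix (Fin n) (Fin n) ℝ)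
    {b : ℝ → Fin n → ℝ} {b' : Fin n → ℝ} {t : ℝ} (hb : HasDerivAt b b' t) :
    HasDerivAt (fun s => P.mulVec (b s)) (P.mulVec b') t := by
  rw [hasDerivAt_pi]
  intro i
  simp only [mulVec, dotProduct]
  exact HasDerivAt.fun_sum fun j _ => (hasDerivAt_pi.mp hb j).const_mul (P i j)

theorem aux_dot_symm {n : ℕ} {P : Matrix (Fin n) (Fin n) ℝ} (hPsymm : P.IsSymm)
    (a b : Fin n → ℝ) : a ⬝ᵥ P.mulVec b = b ⬝ᵥ P.mulVec a := by
  rw [dotProduct_mulVec, dotProduct_comm,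
    show a ᵥ* P = a ᵥ* Pᵀ by rw [hPsymm], vecMul_transpose]

theorem aux_quad_LMI {n : ℕ} {P A : Matrix (Fin n) (Fin n) ℝ} (hPsymm : P.IsSymm)
    {lam eps : ℝ} (heps : 0 ≤ eps)
    (h : matLE (Aᵀ * P + P * A) (-((2 * lam) • P) - eps • (1 : Matrix (Fin n) (Fin n) ℝ)))
    (z : Fin n → ℝ) :
    z ⬝ᵥ P.mulVec (A.mulVec z) ≤ -lam * (z ⬝ᵥ P.mulVec z) := by
  have h1 := h.re_dotProduct_nonneg z
  simp only [RCLike.re_to_real, star_trivial] at h1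
  have e1 : z ⬝ᵥ (Aᵀ * P).mulVec z = z ⬝ᵥ P.mulVec (A.mulVec z) := by
    rw [← mulVec_mulVec, dotProduct_mulVec, vecMul_transpose]
    exact aux_dot_symm hPsymm _ _
  have e2 : z ⬝ᵥ (P * A).mulVec z = z ⬝ᵥ P.mulVec (A.mulVec z) := by
    rw [← mulVec_mulVec]
  have hz2 : 0 ≤ z ⬝ᵥ z := Finset.sum_nonneg fun i _ => mul_self_nonneg (z i)
  simp only [sub_mulVec, add_mulVec, neg_mulVec, smul_mulVec, one_mulVec,
    dotProduct_sub, dotProduct_add, dotProduct_neg, dotProduct_smul, smul_eq_mul,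
    e1, e2] at h1
  nlinarith [mul_nonneg heps hz2]

theorem aux_incr {n : ℕ} {f : (Fin n → ℝ) → (Fin n → ℝ)}
    {J : (Fin n → ℝ) → Matrix (Fin n) (Fin n) ℝ} (hJ : IsJacobianOf J f)
    {P : Matrix (Fin n) (Fin n) ℝ} (hPsymm : P.IsSymm)
    {lam eps : ℝ} (heps : 0 ≤ eps)
    (hLMI : ∀ x : Fin n → ℝ, matLE ((J x)ᵀ * P + P * J x)
      (-((2 * lam) • P) - eps • (1 : Matrix (Fin n) (Fin n) ℝ)))
    (a b : Fin n → ℝ) :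
    (a - b) ⬝ᵥ P.mulVec (f a - f b) ≤ -lam * ((a - b) ⬝ᵥ P.mulVec (a - b)) := by
  set z := a - b with hz
  set q := z ⬝ᵥ P.mulVec z with hq
  have hg : ∀ s : ℝ, HasDerivAt (fun s => z ⬝ᵥ P.mulVec (f (b + s • z)) + lam * q * s)
      (z ⬝ᵥ P.mulVec ((J (b + s • z)).mulVec z) + lam * q) s := by
    intro s
    have hcurve : HasDerivAt (fun s : ℝ => b + s • z) z s := by
      simpa using ((hasDerivAt_id s).smul_const z).const_add b
    have hfc : HasDerivAt (fun s : ℝ => f (b + s • z)) ((J (b + s • z)).mulVec z) s := by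
      exact (hJ (b + s • z)).comp_hasDerivAt s hcurve
    have := aux_hasDerivAt_dot (hasDerivAt_const s z) (aux_hasDerivAt_mulVec P hfc)
    simp only [zero_dotProduct, zero_add] at this
    exact this.add (by simpa using (hasDerivAt_id s).const_mul (lam * q))
  have hanti : Antitone (fun s => z ⬝ᵥ P.mulVec (f (b + s • z)) + lam * q * s) := by
    apply antitone_of_deriv_nonpos (fun s => (hg s).differentiableAt)
    intro s
    rw [(hg s).deriv]
    have := aux_quad_LMI hPsymm heps (hLMI (b + s • z)) z
    linarith
  have h01 := hanti (show (0:ℝ) ≤ 1 by norm_num)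
  simp only [zero_smul, add_zero, one_smul, mul_zero, mul_one] at h01
  have hba : b + z = a := by simp [hz]
  rw [hba] at h01
  have : z ⬝ᵥ P.mulVec (f a - f b) = z ⬝ᵥ P.mulVec (f a) - z ⬝ᵥ P.mulVec (f b) := by
    rw [mulVec_sub, dotProduct_sub]
  linarith

/-- the cone K⁻ = {z : zᵀPz ≤ 0} is forward invariant for the
difference of two solutions. -/
theorem cone_forward_invariant_for_differences {n : ℕ}
    (f : (Fin n → ℝ) → (Fin n → ℝ)) (J : (Fin n → ℝ) → Matrix (Fin n) (Fin n) ℝ)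
    (hf : ContDiff ℝ 1 f) (hJ : IsJacobianOf J f)
    (P : Matrix (Fin n) (Fin n) ℝ) (hPsymm : P.IsSymm)
    (lam eps : ℝ) (hlam : 0 ≤ lam) (heps : 0 ≤ eps)
    (hLMI : ∀ x : Fin n → ℝ, matLE ((J x)ᵀ * P + P * J x)
      (-((2 * lam) • P) - eps • (1 : Matrix (Fin n) (Fin n) ℝ)))
    (x y : ℝ → Fin n → ℝ)
    (hx : ∀ t : ℝ, 0 ≤ t → HasDerivAt x (f (x t)) t)
    (hy : ∀ t : ℝ, 0 ≤ t → HasDerivAt y (f (y t)) t)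
    (h0 : quadForm P (x 0 - y 0) ≤ 0) :
    ∀ t : ℝ, 0 ≤ t → quadForm P (x t - y t) ≤ 0 := by
  set z : ℝ → Fin n → ℝ := fun t => x t - y t with hzdef
  set V : ℝ → ℝ := fun t => z t ⬝ᵥ P.mulVec (z t) with hVdef
  set W : ℝ → ℝ := fun t => Real.exp (2 * lam * t) * V t with hWdef
  have hVq : ∀ t, quadForm P (x t - y t) = V t := fun t => rfl
  have hW : ∀ t : ℝ, 0 ≤ t → HasDerivAt W
      (2 * lam * Real.exp (2 * lam * t) * V t +
        Real.exp (2 * lam * t) *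
          ((f (x t) - f (y t)) ⬝ᵥ P.mulVec (z t) + z t ⬝ᵥ P.mulVec (f (x t) - f (y t)))) t := by
    intro t ht
    have hzt : HasDerivAt z (f (x t) - f (y t)) t := (hx t ht).sub (hy t ht)
    have hVt : HasDerivAt V ((f (x t) - f (y t)) ⬝ᵥ P.mulVec (z t) +
        z t ⬝ᵥ P.mulVec (f (x t) - f (y t))) t :=
      aux_hasDerivAt_dot hzt (aux_hasDerivAt_mulVec P hzt)
    have hexp : HasDerivAt (fun t : ℝ => Real.exp (2 * lam * t))
        (Real.exp (2 * lam * t) * (2 * lam)) t := by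
      simpa using ((hasDerivAt_id t).const_mul (2 * lam)).exp
    have := hexp.mul hVt
    exact this.congr_deriv (by ring)
  have hWder_nonpos : ∀ t : ℝ, 0 ≤ t →
      2 * lam * Real.exp (2 * lam * t) * V t +
        Real.exp (2 * lam * t) *
          ((f (x t) - f (y t)) ⬝ᵥ P.mulVec (z t) + z t ⬝ᵥ P.mulVec (f (x t) - f (y t))) ≤ 0 := by
    intro t ht
    have hkey : z t ⬝ᵥ P.mulVec (f (x t) - f (y t)) ≤ -lam * (z t ⬝ᵥ P.mulVec (z t)) :=
      aux_incr hJ hPsymm heps hLMI (x t) (y t)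
    have hsymm : (f (x t) - f (y t)) ⬝ᵥ P.mulVec (z t)
        = z t ⬝ᵥ P.mulVec (f (x t) - f (y t)) := aux_dot_symm hPsymm _ _
    have hexp_pos : (0:ℝ) < Real.exp (2 * lam * t) := Real.exp_pos _
    have hVt : V t = z t ⬝ᵥ P.mulVec (z t) := rfl
    rw [hsymm, hVt]
    nlinarith [hexp_pos]
  have hanti : AntitoneOn W (Set.Ici (0:ℝ)) := by
    apply antitoneOn_of_deriv_nonpos (convex_Ici 0)
    · intro t ht
      exact ((hW t ht).continuousAt).continuousWithinAt
    · intro t ht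
      rw [interior_Ici] at ht
      exact ((hW t (le_of_lt ht)).differentiableAt).differentiableWithinAt
    · intro t ht
      rw [interior_Ici] at ht
      rw [(hW t (le_of_lt ht)).deriv]
      exact hWder_nonpos t (le_of_lt ht)
  intro t ht
  have h1 : W t ≤ W 0 := hanti (Set.self_mem_Ici) ht ht
  have h2 : W 0 ≤ 0 := by
    have : V 0 ≤ 0 := h0
    simp only [hWdef, mul_zero, Real.exp_zero, one_mul]
    exact this
  have hexp_pos : (0:ℝ) < Real.exp (2 * lam * t) := Real.exp_pos _
  rw [hVq]
  have h3 : Real.exp (2 * lam * t) * V t ≤ 0 := h1.trans h2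
  nlinarith [h3, hexp_pos]
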